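/- For all p = 2^n with n ≥ 3: in G_p each of the first p/2 vertices has score (outdegree) p/2 and each of the last p/2 vertices has score p/2 − 1; in G_p^* each of the first p/2 vertices has score p/2 − 1 and each of the last p/2 vertices has score p/2. Equivalently, for i ≤ p/2 the number of j with M_p[i,j] > 0 equals p/2 and the number of j with M_p^*[i,j] > 0 equals p/2 − 1, and for i > p/2 these counts are p/2 − 1 and p/2 respectively. -/

import Mathlib

/-- The matrix `M₄` (1-indexed). -/
def M4 (i j : ℕ) : ℤ :=
  (([[0,1,2,3],[-1,0,3,-2],[-2,-3,0,1],[-3,2,-1,0]] : List (List ℤ)).getD (i-1) []).getD (j-1) 0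

/-- The matrix `M₄*` (1-indexed). -/
def M4s (i j : ℕ) : ℤ :=
  (([[0,-2,-3,-1],[2,0,1,-3],[3,-1,0,2],[1,3,-2,0]] : List (List ℤ)).getD (i-1) []).getD (j-1) 0

/-- For block-index difference `d`, `blockSC d = (s, c)` means that the corresponding
4×4 block of `M_p` is `s·M₄ + c·I` (and the block of `M_p*` is `s·M₄* − c·I`):
`(1,0)` if `d = 0`; `(-1,4)` if `d ≡ 1 (mod 4)`; `(-1,-4)` if `d ≡ -1 (mod 4)`;
`(1, x+4)` if `d = y·2^x`, `x ≥ 1`, `y ≡ 1 (mod 4)`;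
`(1, -(x+4))` if `d = y·2^x`, `x ≥ 1`, `y ≡ -1 (mod 4)`. -/
def blockSC (d : ℤ) : ℤ × ℤ :=
  if d = 0 then (1, 0)
  else if d % 4 = 1 then (-1, 4)
  else if d % 4 = 3 then (-1, -4)
  else
    let x : ℕ := d.natAbs.factorization 2
    if (d / (2:ℤ)^x) % 4 = 1 then (1, (x:ℤ) + 4) else (1, -((x:ℤ) + 4))

/-- Entry `(i,j)` (1-indexed) of `M_p`, for any `p = 2^n ≥ 4` and `1 ≤ i,j ≤ p`;
the defining block formula depends only on `i` and `j`, not on `p`. -/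
def Ment (i j : ℕ) : ℤ :=
  let d : ℤ := (((j-1)/4 : ℕ) : ℤ) - (((i-1)/4 : ℕ) : ℤ)
  (blockSC d).1 * M4 ((i-1) % 4 + 1) ((j-1) % 4 + 1)
    + (if (i-1) % 4 = (j-1) % 4 then (blockSC d).2 else 0)

/-- Entry `(i,j)` (1-indexed) of `M_p*`. -/
def Ments (i j : ℕ) : ℤ :=
  let d : ℤ := (((j-1)/4 : ℕ) : ℤ) - (((i-1)/4 : ℕ) : ℤ)
  (blockSC d).1 * M4s ((i-1) % 4 + 1) ((j-1) % 4 + 1)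
    + (if (i-1) % 4 = (j-1) % 4 then -(blockSC d).2 else 0)

/-- The `p × p` matrix `M_p`, `p = 2^n`, as a function on 1-based indices
(entries outside the index range `1,…,p` are set to `0`). -/
def Mp (n i j : ℕ) : ℤ :=
  if 1 ≤ i ∧ i ≤ 2^n ∧ 1 ≤ j ∧ j ≤ 2^n then Ment i j else 0

/-- The `p × p` matrix `M_p*`, `p = 2^n`, as a function on 1-based indices. -/
def Mps (n i j : ℕ) : ℤ :=
  if 1 ≤ i ∧ i ≤ 2^n ∧ 1 ≤ j ∧ j ≤ 2^n then Ments i j else 0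

/-- The base mappings `σ_{4,k}` : `sigma4 k i = σ_{4,k}(i)` (value `0` at the
undefined point `i = k`). -/
def sigma4 (k i : ℕ) : ℕ :=
  (([[0,4,2,3],[3,0,4,1],[4,1,0,2],[2,3,1,0]] : List (List ℕ)).getD (k-1) []).getD (i-1) 0

/-- The mappings `σ_{p,k}` for `p = 2^n`: `sigma n k i = σ_{2^n, k}(i)`
(value `0` at the undefined point `i = k`, and junk values for `n < 2`). -/
def sigma : ℕ → ℕ → ℕ → ℕ
  | 0, _, _ => 0
  | 1, _, _ => 0
  | 2, k, i => sigma4 k i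
  | n+3, k, i =>
    let P := 2^(n+2)
    if k ≤ P then
      if i = k + P then i
      else if i ≤ P then sigma (n+2) k i + P
      else sigma (n+2) k (i - P)
    else
      if i = k - P then i
      else if i ≤ P then sigma (n+2) (k - P) i + P
      else sigma (n+2) (k - P) (i - P)


section Aux

lemma blockSC_fst (d : ℤ) : (blockSC d).1 = if d % 2 = 0 then 1 else -1 := by
  unfold blockSC
  by_cases h2 : d % 2 = 0
  · rw [if_pos h2]
    have h41 : d % 4 ≠ 1 := by omega
    have h43 : d % 4 ≠ 3 := by omega
    by_cases h0 : d = 0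
    · simp [h0]
    · rw [if_neg h0, if_neg h41, if_neg h43]
      dsimp only
      split <;> rfl
  · rw [if_neg h2]
    have h0 : d ≠ 0 := by omega
    have h4 : d % 4 = 1 ∨ d % 4 = 3 := by omega
    rw [if_neg h0]
    rcases h4 with h | h
    · rw [if_pos h]
    · rw [if_neg (by omega), if_pos h]

lemma blockSC_snd_eq (x : ℕ) (y : ℤ) (hy : y % 2 = 1) :
    (blockSC (y * 2^x)).2 = if y % 4 = 1 then (x:ℤ) + 4 else -((x:ℤ) + 4) := by
  have hy0 : y ≠ 0 := by omega
  have hy4 : y % 4 = 1 ∨ y % 4 = 3 := by omega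
  cases x with
  | zero =>
    simp only [pow_zero, mul_one]
    unfold blockSC
    rcases hy4 with h | h <;> simp [h, hy0] <;> omega
  | succ k =>
    have hd0 : y * 2^(k+1) ≠ 0 := by positivity
    have hd2 : (y * 2^(k+1)) % 2 = 0 := by
      have : (2:ℤ) ∣ y * 2^(k+1) := ⟨y * 2^k, by ring⟩
      omega
    have hd41 : (y * 2^(k+1)) % 4 ≠ 1 := by omega
    have hd43 : (y * 2^(k+1)) % 4 ≠ 3 := by omega
    clear hd2
    have hfac : (y * 2^(k+1)).natAbs.factorization 2 = k + 1 := by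
      rw [Int.natAbs_mul]
      rw [Nat.factorization_mul (by simpa using hy0) (by positivity)]
      have h1 : (y.natAbs).factorization 2 = 0 := by
        apply Nat.factorization_eq_zero_of_not_dvd
        intro hdvd
        have : (2:ℤ) ∣ y := by exact_mod_cast Int.natAbs_dvd_natAbs.mp (by simpa using hdvd)
        omega
      have h2 : ((2:ℤ)^(k+1)).natAbs.factorization 2 = k + 1 := by
        rw [Int.natAbs_pow]
        simp [Nat.Prime.factorization_pow Nat.prime_two]
      simp [h1, h2, Nat.Prime.factorization_self Nat.prime_two]
    have hdiv : (y * 2^(k+1)) / 2^(k+1) = y := by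
      apply Int.mul_ediv_cancel
      positivity
    unfold blockSC
    simp only [hd0, if_false, hd41, if_false, hd43, if_false, hfac, hdiv]
    split_ifs <;> rfl

lemma exists_rep (d : ℤ) (hd : d ≠ 0) : ∃ (x : ℕ) (y : ℤ), y % 2 = 1 ∧ d = y * 2^x := by
  obtain ⟨k, o, ho, hko⟩ := Nat.exists_eq_two_pow_mul_odd (n := d.natAbs) (by simpa using hd)
  have ho2 : (o : ℤ) % 2 = 1 := by
    obtain ⟨c, hc⟩ := ho; omega
  have habs : (d.natAbs : ℤ) = (o : ℤ) * 2^k := by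
    push_cast [hko]; ring
  rcases Int.natAbs_eq d with h | h
  · exact ⟨k, o, ho2, by rw [h, habs]⟩
  · exact ⟨k, -o, by omega, by rw [h, habs]; ring⟩

lemma gpos_neg {d : ℤ} (hd : d ≠ 0) : 0 < (blockSC (-d)).2 ↔ ¬ 0 < (blockSC d).2 := by
  obtain ⟨x, y, hy, rfl⟩ := exists_rep d hd
  have hneg : -(y * 2^x) = (-y) * 2^x := by ring
  rw [hneg, blockSC_snd_eq x (-y) (by omega), blockSC_snd_eq x y hy]
  have h4 : y % 4 = 1 ∨ y % 4 = 3 := by omega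
  have hx : (0:ℤ) ≤ (x:ℤ) := by positivity
  split_ifs <;> omega

lemma gpos_pow (t : ℕ) : 0 < (blockSC (2^t)).2 := by
  have : (2:ℤ)^t = 1 * 2^t := by ring
  rw [this, blockSC_snd_eq t 1 (by norm_num)]
  have : (0:ℤ) ≤ (t:ℤ) := by positivity
  norm_num
  omega

lemma gpos_zero : ¬ 0 < (blockSC 0).2 := by
  unfold blockSC; norm_num

lemma blockSC_snd_ne {d : ℤ} (hd : d ≠ 0) : (blockSC d).2 ≠ 0 := by
  obtain ⟨x, y, hy, rfl⟩ := exists_rep d hd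
  rw [blockSC_snd_eq x y hy]
  have hx : (0:ℤ) ≤ (x:ℤ) := by positivity
  split <;> omega

lemma gpos_sub {t : ℕ} {d : ℤ} (ht : 1 ≤ t) (h1 : 0 < d) (h2 : d < 2^t)
    (h3 : d ≠ 2^(t-1)) : 0 < (blockSC (2^t - d)).2 ↔ ¬ 0 < (blockSC d).2 := by
  obtain ⟨x, y, hy, rfl⟩ := exists_rep d (by omega)
  have hp : (0:ℤ) < 2^x := by positivity
  have hy1 : 1 ≤ y := by nlinarith
  have hxt : x + 2 ≤ t := by
    rcases Nat.lt_or_ge x t with hlt | hge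
    · by_contra hcon
      have hx : x = t - 1 := by omega
      have ht' : t = x + 1 := by omega
      rw [ht', pow_succ] at h2
      have hy2 : y < 2 := by
        have := lt_of_mul_lt_mul_right (by linarith : y * 2^x < 2 * 2^x) hp.le
        linarith
      have hy1' : y = 1 := by omega
      apply h3
      rw [hy1', one_mul, hx]
    · have : (2:ℤ)^t ≤ 2^x := pow_le_pow_right₀ (by norm_num) hge
      nlinarith
  have hsplit : (2:ℤ)^t = 2^(t-x) * 2^x := by
    rw [← pow_add]; congr 1; omega
  have hsub : (2:ℤ)^t - y * 2^x = (2^(t-x) - y) * 2^x := by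
    rw [hsplit]; ring
  have e1 : (2:ℤ)^(t-x) = 4 * 2^(t-x-2) := by
    rw [show t - x = 2 + (t-x-2) by omega, pow_add]; norm_num
  have hK : (0:ℤ) ≤ 2^(t-x-2) := by positivity
  have hz2 : ((2:ℤ)^(t-x) - y) % 2 = 1 := by omega
  rw [hsub, blockSC_snd_eq x _ hz2, blockSC_snd_eq x y hy]
  have hx : (0:ℤ) ≤ (x:ℤ) := by positivity
  have h4 : y % 4 = 1 ∨ y % 4 = 3 := by omega
  split_ifs <;> omega

/-- Diagonal positive count for row-block `I` in a `m`-block matrix. -/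
noncomputable def Efun (m I : ℕ) : ℕ :=
  ((Finset.Icc (-(I:ℤ)) ((m:ℤ)-1-(I:ℤ))).filter (fun d => 0 < (blockSC d).2)).card

lemma sum_Icc_top {a b : ℤ} (h : a ≤ b) (f : ℤ → ℕ) :
    ∑ d ∈ Finset.Icc a b, f d = (∑ d ∈ Finset.Icc a (b-1), f d) + f b := by
  have : Finset.Icc a b = insert b (Finset.Icc a (b-1)) := by
    ext x; simp only [Finset.mem_Icc, Finset.mem_insert]; omega
  rw [this, Finset.sum_insert (by simp only [Finset.mem_Icc]; omega)]
  ring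

lemma sum_Icc_bot {a b : ℤ} (h : a ≤ b) (f : ℤ → ℕ) :
    ∑ d ∈ Finset.Icc a b, f d = f a + (∑ d ∈ Finset.Icc (a+1) b, f d) := by
  have : Finset.Icc a b = insert a (Finset.Icc (a+1) b) := by
    ext x; simp only [Finset.mem_Icc, Finset.mem_insert]; omega
  rw [this, Finset.sum_insert (by simp only [Finset.mem_Icc]; omega)]

lemma Efun_step {m I : ℕ} (hI : I + 1 < m) :
    Efun m (I+1) + (if 0 < (blockSC ((m:ℤ)-1-(I:ℤ))).2 then 1 else 0)
      = Efun m I + (if 0 < (blockSC (-(I:ℤ)-1)).2 then 1 else 0) := by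
  unfold Efun
  rw [Finset.card_filter, Finset.card_filter]
  have c1 : (-(↑(I+1):ℤ)) = -(I:ℤ)-1 := by push_cast; ring
  have c2 : ((m:ℤ)-1-(↑(I+1):ℤ)) = (m:ℤ)-1-(I:ℤ)-1 := by push_cast; ring
  rw [c1, c2]
  rw [← sum_Icc_top (by omega) (fun d => if 0 < (blockSC d).2 then 1 else 0)]
  rw [sum_Icc_bot (a := -(I:ℤ)-1) (by omega) (fun d => if 0 < (blockSC d).2 then 1 else 0)]
  ring_nf

lemma Efun_reflect {m I : ℕ} (hI : I < m) : Efun m I + 1 + Efun m (m-1-I) = m := by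
  have hc : ((m-1-I : ℕ) : ℤ) = (m:ℤ)-1-(I:ℤ) := by omega
  set S := Finset.Icc (-(I:ℤ)) ((m:ℤ)-1-(I:ℤ)) with hS
  have hrefl : Efun m (m-1-I)
      = (S.filter (fun d => ¬ 0 < (blockSC d).2 ∧ d ≠ 0)).card := by
    unfold Efun
    rw [hc]
    apply Finset.card_nbij' (fun d => -d) (fun d => -d)
    · intro a ha
      simp only [Finset.mem_coe, Finset.mem_filter, Finset.mem_Icc, hS] at ha ⊢
      obtain ⟨⟨hl, hr⟩, hg⟩ := ha
      have ha0 : a ≠ 0 := fun h => gpos_zero (h ▸ hg)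
      refine ⟨⟨by omega, by omega⟩, ?_, by omega⟩
      intro hpos
      exact ((gpos_neg ha0).mp hpos) hg
    · intro a ha
      simp only [Finset.mem_coe, Finset.mem_filter, Finset.mem_Icc, hS] at ha ⊢
      refine ⟨by omega, ?_⟩
      exact (gpos_neg ha.2.2).mpr ha.2.1
    · intro a _; ring
    · intro a _; ring
  have hsplit : (S.filter (fun d => ¬ 0 < (blockSC d).2 ∧ d ≠ 0))
      = (S.filter (fun d => ¬ 0 < (blockSC d).2)).erase 0 := by
    ext d
    simp only [Finset.mem_filter, Finset.mem_erase]
    tauto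
  have h0mem : (0:ℤ) ∈ S.filter (fun d => ¬ 0 < (blockSC d).2) := by
    simp only [Finset.mem_filter, Finset.mem_Icc, hS]
    exact ⟨⟨by omega, by omega⟩, gpos_zero⟩
  have hcard1 : (S.filter (fun d => ¬ 0 < (blockSC d).2)).card
      = Efun m (m-1-I) + 1 := by
    rw [hrefl, hsplit]
    rw [Finset.card_erase_of_mem h0mem]
    have : 1 ≤ (S.filter (fun d => ¬ 0 < (blockSC d).2)).card :=
      Finset.card_pos.mpr ⟨0, h0mem⟩
    omega
  have htot : Efun m I + (S.filter (fun d => ¬ 0 < (blockSC d).2)).card = S.card :=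
    Finset.card_filter_add_card_filter_not _
  have hScard : S.card = m := by
    rw [hS, Int.card_Icc]
    omega
  omega

lemma Efun_neg_count {m I : ℕ} (hI : I < m) :
    Efun m I + 1 +
      ((Finset.Icc (-(I:ℤ)) ((m:ℤ)-1-(I:ℤ))).filter (fun d => (blockSC d).2 < 0)).card
      = m := by
  set S := Finset.Icc (-(I:ℤ)) ((m:ℤ)-1-(I:ℤ)) with hS
  have hsplit : S.filter (fun d => ¬ 0 < (blockSC d).2)
      = insert 0 (S.filter (fun d => (blockSC d).2 < 0)) := by
    ext d
    simp only [Finset.mem_filter, Finset.mem_insert]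
    constructor
    · rintro ⟨hd, hle⟩
      by_cases h0 : d = 0
      · exact Or.inl h0
      · exact Or.inr ⟨hd, lt_of_le_of_ne (by omega) (blockSC_snd_ne h0)⟩
    · rintro (rfl | ⟨hd, hlt⟩)
      · refine ⟨?_, gpos_zero⟩
        simp only [hS, Finset.mem_Icc]; omega
      · exact ⟨hd, by omega⟩
  have h0nm : (0:ℤ) ∉ S.filter (fun d => (blockSC d).2 < 0) := by
    simp only [Finset.mem_filter]
    rintro ⟨-, h⟩
    have h0 : (blockSC 0).2 = 0 := rfl
    omega
  have htot : Efun m I + (S.filter (fun d => ¬ 0 < (blockSC d).2)).card = S.card :=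
    Finset.card_filter_add_card_filter_not _
  have hScard : S.card = m := by rw [hS, Int.card_Icc]; omega
  rw [hsplit, Finset.card_insert_of_notMem h0nm] at htot
  omega

lemma Efun_const {t : ℕ} (ht : 1 ≤ t) {I : ℕ} (hI : I + 1 < 2^t)
    (hne : I + 1 ≠ 2^(t-1)) : Efun (2^t) (I+1) = Efun (2^t) I := by
  have hstep := Efun_step (m := 2^t) (I := I) hI
  have harith : ((2^t : ℕ) : ℤ) - 1 - (I:ℤ) = 2^t - ((I:ℤ)+1) := by push_cast; ring
  have hneg : (-(I:ℤ)-1) = -((I:ℤ)+1) := by ring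
  have hd0 : ((I:ℤ)+1) ≠ 0 := by omega
  have hiff1 : (0 < (blockSC (-((I:ℤ)+1))).2) ↔ ¬ 0 < (blockSC ((I:ℤ)+1)).2 := gpos_neg hd0
  have hiff2 : (0 < (blockSC ((2:ℤ)^t - ((I:ℤ)+1))).2) ↔ ¬ 0 < (blockSC ((I:ℤ)+1)).2 := by
    apply gpos_sub ht (by omega)
    · have : ((2^t : ℕ) : ℤ) = (2:ℤ)^t := by push_cast; ring
      omega
    · intro hcon
      apply hne
      have : ((2:ℤ)^(t-1)) = ((2^(t-1) : ℕ) : ℤ) := by push_cast; ring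
      omega
  rw [harith, hneg] at hstep
  by_cases hc : 0 < (blockSC ((I:ℤ)+1)).2
  · rw [if_neg (by rw [hiff2]; simp [hc]), if_neg (by rw [hiff1]; simp [hc])] at hstep
    omega
  · rw [if_pos (hiff2.mpr hc), if_pos (hiff1.mpr hc)] at hstep
    omega

lemma Efun_cross {t : ℕ} (ht : 1 ≤ t) :
    Efun (2^t) (2^(t-1)) + 1 = Efun (2^t) (2^(t-1) - 1) := by
  have hlt : 2^(t-1) < 2^t := Nat.pow_lt_pow_right (by norm_num) (by omega)
  have h1 : 1 ≤ 2^(t-1) := Nat.one_le_two_pow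
  set I := 2^(t-1) - 1 with hIdef
  have hI1 : I + 1 = 2^(t-1) := by omega
  have hstep := Efun_step (m := 2^t) (I := I) (by omega)
  have h2 : (2:ℕ)^t = 2^(t-1) * 2 := by
    rw [← pow_succ]; congr 1; omega
  have e1 : ((2^t : ℕ) : ℤ) = (2:ℤ)^(t-1) * 2 := by push_cast [h2]; ring
  have e2 : ((2^(t-1) : ℕ) : ℤ) = (2:ℤ)^(t-1) := by push_cast; ring
  have harith : ((2^t : ℕ) : ℤ) - 1 - (I:ℤ) = (2:ℤ)^(t-1) := by omega
  have hneg : (-(I:ℤ)-1) = -((2:ℤ)^(t-1)) := by omega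
  rw [harith, hneg] at hstep
  rw [if_pos (gpos_pow (t-1))] at hstep
  rw [if_neg (by
    rw [gpos_neg (by positivity : ((2:ℤ)^(t-1)) ≠ 0)]
    simp [gpos_pow (t-1)])] at hstep
  rw [hI1] at hstep
  omega

lemma Efun_upto {t : ℕ} (ht : 1 ≤ t) {I : ℕ} (hI : I < 2^(t-1)) :
    Efun (2^t) I = Efun (2^t) 0 := by
  induction I with
  | zero => rfl
  | succ k ih =>
    have hlt : 2^(t-1) < 2^t := Nat.pow_lt_pow_right (by norm_num) (by omega)
    rw [Efun_const ht (by omega) (by omega), ih (by omega)]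

lemma Efun_after {t : ℕ} (ht : 1 ≤ t) {I : ℕ} (hI1 : 2^(t-1) ≤ I) (hI2 : I < 2^t) :
    Efun (2^t) I = Efun (2^t) (2^(t-1)) := by
  induction I with
  | zero =>
    have := Nat.one_le_two_pow (n := t-1)
    omega
  | succ k ih =>
    rcases Nat.lt_or_ge k (2^(t-1)) with h | h
    · have : k + 1 = 2^(t-1) := by omega
      rw [this]
    · rw [Efun_const ht (by omega) (by omega), ih h (by omega)]

lemma Efun_val {t : ℕ} (ht : 1 ≤ t) {I : ℕ} (hI : I < 2^t) :
    (I < 2^(t-1) → Efun (2^t) I = 2^(t-1)) ∧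
    (2^(t-1) ≤ I → Efun (2^t) I + 1 = 2^(t-1)) := by
  have h1 : 1 ≤ 2^(t-1) := Nat.one_le_two_pow
  have hpow : (2:ℕ)^t = 2^(t-1) * 2 := by rw [← pow_succ]; congr 1; omega
  have hrefl := Efun_reflect (m := 2^t) (I := 0) (by positivity)
  have hlast : Efun (2^t) (2^t - 1 - 0) = Efun (2^t) (2^(t-1)) := by
    rcases Nat.eq_or_lt_of_le h1 with h | h
    · congr 1; omega
    · exact Efun_after ht (by omega) (by omega)
  have hcross := Efun_cross ht
  have hup : Efun (2^t) (2^(t-1) - 1) = Efun (2^t) 0 := Efun_upto ht (by omega)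
  rw [hlast] at hrefl
  have hE0 : Efun (2^t) 0 = 2^(t-1) := by omega
  constructor
  · intro h; rw [Efun_upto ht h, hE0]
  · intro h
    rw [Efun_after ht h hI]
    omega

lemma row4M (r : ℕ) (hr : r < 4) (s c : ℤ) (hs : s = 1 ∨ s = -1) :
    (∑ q ∈ Finset.range 4, if 0 < s * M4 (r+1) (q+1) + (if r = q then c else 0) then 1 else 0)
      = (if s = 1 then (if r = 0 then 3 else 1) else (if r = 0 then 0 else 2))
        + (if 0 < c then 1 else 0) := by
  rcases hs with rfl | rfl <;> interval_cases r <;>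
    simp only [Finset.sum_range_succ, Finset.sum_range_zero, M4, List.getD] <;>
    norm_num <;> split_ifs <;> omega

lemma row4Ms (r : ℕ) (hr : r < 4) (s c : ℤ) (hs : s = 1 ∨ s = -1) :
    (∑ q ∈ Finset.range 4, if 0 < s * M4s (r+1) (q+1) + (if r = q then -c else 0) then 1 else 0)
      = (if s = 1 then (if r = 0 then 0 else 2) else (if r = 0 then 3 else 1))
        + (if c < 0 then 1 else 0) := by
  rcases hs with rfl | rfl <;> interval_cases r <;>
    simp only [Finset.sum_range_succ, Finset.sum_range_zero, M4s, List.getD] <;>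
    norm_num <;> split_ifs <;> omega

lemma sum_range_two_mul (k : ℕ) (f : ℕ → ℕ) (hf : ∀ t, f (2*t) + f (2*t+1) = 3) :
    ∑ J ∈ Finset.range (2*k), f J = 3 * k := by
  induction k with
  | zero => simp
  | succ k ih =>
    have h : 2*(k+1) = (2*k) + 1 + 1 := by ring
    rw [h, Finset.sum_range_succ, Finset.sum_range_succ, ih]
    have := hf k
    omega

lemma sum_range_four_mul (m : ℕ) (f : ℕ → ℕ) :
    ∑ k ∈ Finset.range (4*m), f k
      = ∑ J ∈ Finset.range m, (f (4*J) + f (4*J+1) + f (4*J+2) + f (4*J+3)) := by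
  induction m with
  | zero => simp
  | succ m ih =>
    have h : 4*(m+1) = (4*m) + 1 + 1 + 1 + 1 := by ring
    rw [h, Finset.sum_range_succ, Finset.sum_range_succ, Finset.sum_range_succ,
      Finset.sum_range_succ, ih, Finset.sum_range_succ]
    ring

lemma sum_shift_Icc (m I : ℕ) (f : ℤ → ℕ) :
    ∑ J ∈ Finset.range m, f ((J:ℤ) - (I:ℤ))
      = ∑ d ∈ Finset.Icc (-(I:ℤ)) ((m:ℤ)-1-(I:ℤ)), f d := by
  refine Finset.sum_nbij' (i := fun J => (J:ℤ) - (I:ℤ)) (j := fun d => (d + (I:ℤ)).toNat)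
    ?_ ?_ ?_ ?_ ?_
  · intro a ha
    simp only [Finset.mem_range] at ha
    simp only [Finset.mem_Icc]
    omega
  · intro a ha
    simp only [Finset.mem_Icc] at ha
    simp only [Finset.mem_range]
    omega
  · intro a _; omega
  · intro a ha
    simp only [Finset.mem_Icc] at ha
    omega
  · intro a _; rfl

lemma Ment_block (i J q j : ℕ) (hq : q < 4) (hj : j = 1 + (4*J + q)) :
    Ment i j
      = (blockSC ((J:ℤ) - (((i-1)/4 : ℕ):ℤ))).1 * M4 ((i-1)%4 + 1) (q+1)
        + (if (i-1)%4 = q then (blockSC ((J:ℤ) - (((i-1)/4 : ℕ):ℤ))).2 else 0) := by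
  subst hj
  unfold Ment
  have h1 : 1 + (4*J+q) - 1 = 4*J + q := by omega
  have h2 : (4*J+q)/4 = J := by omega
  have h3 : (4*J+q)%4 = q := by omega
  rw [h1, h2, h3]

lemma Ments_block (i J q j : ℕ) (hq : q < 4) (hj : j = 1 + (4*J + q)) :
    Ments i j
      = (blockSC ((J:ℤ) - (((i-1)/4 : ℕ):ℤ))).1 * M4s ((i-1)%4 + 1) (q+1)
        + (if (i-1)%4 = q then -(blockSC ((J:ℤ) - (((i-1)/4 : ℕ):ℤ))).2 else 0) := by
  subst hj
  unfold Ments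
  have h1 : 1 + (4*J+q) - 1 = 4*J + q := by omega
  have h2 : (4*J+q)/4 = J := by omega
  have h3 : (4*J+q)%4 = q := by omega
  rw [h1, h2, h3]

lemma sum_Icc_one (N : ℕ) (f : ℕ → ℕ) :
    ∑ j ∈ Finset.Icc 1 N, f j = ∑ k ∈ Finset.range N, f (1+k) := by
  apply Finset.sum_nbij' (i := fun j => j - 1) (j := fun k => 1 + k) <;> intros <;>
    simp_all [Finset.mem_Icc, Finset.mem_range] <;> omega

lemma base_sum (m K : ℕ) (hm : m = 2*K) (I : ℕ) (b1 b2 : ℕ) (hb : b1 + b2 = 3) :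
    ∑ J ∈ Finset.range m, (if (blockSC ((J:ℤ)-(I:ℤ))).1 = 1 then b1 else b2) = 3*K := by
  subst hm
  apply sum_range_two_mul
  intro u
  rw [blockSC_fst, blockSC_fst]
  by_cases hc : (((2*u:ℕ):ℤ) - (I:ℤ)) % 2 = 0
  · have hc2 : ¬ (((2*u+1:ℕ):ℤ) - (I:ℤ)) % 2 = 0 := by push_cast at hc ⊢; omega
    rw [if_pos hc, if_neg hc2, if_pos rfl, if_neg (by norm_num)]
    exact hb
  · have hc2 : (((2*u+1:ℕ):ℤ) - (I:ℤ)) % 2 = 0 := by push_cast at hc ⊢; omega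
    rw [if_neg hc, if_pos hc2, if_pos rfl, if_neg (by norm_num)]
    omega

lemma diag_sum (m I : ℕ) :
    ∑ J ∈ Finset.range m, (if 0 < (blockSC ((J:ℤ)-(I:ℤ))).2 then 1 else 0) = Efun m I := by
  rw [sum_shift_Icc m I (fun d => if 0 < (blockSC d).2 then 1 else 0)]
  exact (Finset.card_filter _ _).symm

lemma diag_sum_neg (m I : ℕ) :
    ∑ J ∈ Finset.range m, (if (blockSC ((J:ℤ)-(I:ℤ))).2 < 0 then 1 else 0)
      = ((Finset.Icc (-(I:ℤ)) ((m:ℤ)-1-(I:ℤ))).filter (fun d => (blockSC d).2 < 0)).card := by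
  rw [sum_shift_Icc m I (fun d => if (blockSC d).2 < 0 then 1 else 0)]
  exact (Finset.card_filter _ _).symm

lemma count_Ment (n i : ℕ) (hn : 3 ≤ n) (hi1 : 1 ≤ i) (hi2 : i ≤ 2^n) :
    ((Finset.Icc 1 (2^n)).filter (fun j => 0 < Ment i j)).card
      = 3 * 2^(n-3) + Efun (2^(n-2)) ((i-1)/4) := by
  have hr4 : (i-1)%4 < 4 := Nat.mod_lt _ (by norm_num)
  rw [Finset.card_filter, sum_Icc_one, show (2:ℕ)^n = 4 * 2^(n-2) from by
    rw [show n = 2 + (n-2) by omega, pow_add]; norm_num, sum_range_four_mul]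
  have step : ∀ J ∈ Finset.range (2^(n-2)),
      ((if 0 < Ment i (1+4*J) then 1 else 0) + (if 0 < Ment i (1+(4*J+1)) then 1 else 0)
        + (if 0 < Ment i (1+(4*J+2)) then 1 else 0) + (if 0 < Ment i (1+(4*J+3)) then 1 else 0) : ℕ)
      = (if (blockSC ((J:ℤ)-(((i-1)/4:ℕ):ℤ))).1 = 1
            then (if (i-1)%4 = 0 then 3 else 1) else (if (i-1)%4 = 0 then 0 else 2))
        + (if 0 < (blockSC ((J:ℤ)-(((i-1)/4:ℕ):ℤ))).2 then 1 else 0) := by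
    intro J _
    rw [Ment_block i J 0 (1+4*J) (by norm_num) (by ring),
        Ment_block i J 1 (1+(4*J+1)) (by norm_num) rfl,
        Ment_block i J 2 (1+(4*J+2)) (by norm_num) rfl,
        Ment_block i J 3 (1+(4*J+3)) (by norm_num) rfl]
    set d : ℤ := (J:ℤ) - (((i-1)/4:ℕ):ℤ) with hd
    have hs : (blockSC d).1 = 1 ∨ (blockSC d).1 = -1 := by
      rw [blockSC_fst]; split_ifs <;> [left; right] <;> rfl
    have hrow := row4M ((i-1)%4) hr4 (blockSC d).1 (blockSC d).2 hs
    rw [Finset.sum_range_succ, Finset.sum_range_succ, Finset.sum_range_succ,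
      Finset.sum_range_succ, Finset.sum_range_zero] at hrow
    rcases hs with h1 | h1 <;> rw [h1] at hrow ⊢
    · norm_num at hrow
      norm_num
      exact hrow
    · norm_num at hrow
      norm_num
      exact hrow
  rw [Finset.sum_congr rfl step, Finset.sum_add_distrib,
    base_sum (2^(n-2)) (2^(n-3)) (by rw [show n-2 = 1 + (n-3) by omega, pow_add]; norm_num)
      ((i-1)/4) _ _ (by split_ifs <;> norm_num),
    diag_sum]

lemma count_Ments (n i : ℕ) (hn : 3 ≤ n) (hi1 : 1 ≤ i) (hi2 : i ≤ 2^n) :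
    ((Finset.Icc 1 (2^n)).filter (fun j => 0 < Ments i j)).card
      = 3 * 2^(n-3) +
        ((Finset.Icc (-(((i-1)/4:ℕ):ℤ)) (((2^(n-2):ℕ):ℤ)-1-(((i-1)/4:ℕ):ℤ))).filter
          (fun d => (blockSC d).2 < 0)).card := by
  have hr4 : (i-1)%4 < 4 := Nat.mod_lt _ (by norm_num)
  rw [Finset.card_filter, sum_Icc_one, show (2:ℕ)^n = 4 * 2^(n-2) from by
    rw [show n = 2 + (n-2) by omega, pow_add]; norm_num, sum_range_four_mul]
  have step : ∀ J ∈ Finset.range (2^(n-2)),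
      ((if 0 < Ments i (1+4*J) then 1 else 0) + (if 0 < Ments i (1+(4*J+1)) then 1 else 0)
        + (if 0 < Ments i (1+(4*J+2)) then 1 else 0) + (if 0 < Ments i (1+(4*J+3)) then 1 else 0) : ℕ)
      = (if (blockSC ((J:ℤ)-(((i-1)/4:ℕ):ℤ))).1 = 1
            then (if (i-1)%4 = 0 then 0 else 2) else (if (i-1)%4 = 0 then 3 else 1))
        + (if (blockSC ((J:ℤ)-(((i-1)/4:ℕ):ℤ))).2 < 0 then 1 else 0) := by
    intro J _
    rw [Ments_block i J 0 (1+4*J) (by norm_num) (by ring),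
        Ments_block i J 1 (1+(4*J+1)) (by norm_num) rfl,
        Ments_block i J 2 (1+(4*J+2)) (by norm_num) rfl,
        Ments_block i J 3 (1+(4*J+3)) (by norm_num) rfl]
    set d : ℤ := (J:ℤ) - (((i-1)/4:ℕ):ℤ) with hd
    have hs : (blockSC d).1 = 1 ∨ (blockSC d).1 = -1 := by
      rw [blockSC_fst]; split_ifs <;> [left; right] <;> rfl
    have hrow := row4Ms ((i-1)%4) hr4 (blockSC d).1 (blockSC d).2 hs
    rw [Finset.sum_range_succ, Finset.sum_range_succ, Finset.sum_range_succ,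
      Finset.sum_range_succ, Finset.sum_range_zero] at hrow
    rcases hs with h1 | h1 <;> rw [h1] at hrow ⊢
    · norm_num at hrow
      norm_num
      exact hrow
    · norm_num at hrow
      norm_num
      exact hrow
  rw [Finset.sum_congr rfl step, Finset.sum_add_distrib,
    base_sum (2^(n-2)) (2^(n-3)) (by rw [show n-2 = 1 + (n-3) by omega, pow_add]; norm_num)
      ((i-1)/4) _ _ (by split_ifs <;> norm_num),
    diag_sum_neg]


end Aux

/-- For all `p = 2^n` with `n ≥ 3`: in `G_p` each of the first `p/2`
vertices has score `p/2` and each of the last `p/2` vertices has score `p/2 − 1`;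
in `G_p*` the first `p/2` vertices have score `p/2 − 1` and the last `p/2` have
score `p/2`. -/
theorem stmt14 (n p : ℕ) (hn : 3 ≤ n) (hp : p = 2^n) (i : ℕ) (hi1 : 1 ≤ i) (hi2 : i ≤ p) :
    (i ≤ p/2 →
      ((Finset.Icc 1 p).filter (fun j => 0 < Mp n i j)).card = p/2 ∧
      ((Finset.Icc 1 p).filter (fun j => 0 < Mps n i j)).card = p/2 - 1) ∧
    (p/2 < i →
      ((Finset.Icc 1 p).filter (fun j => 0 < Mp n i j)).card = p/2 - 1 ∧
      ((Finset.Icc 1 p).filter (fun j => 0 < Mps n i j)).card = p/2) := by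
  subst hp
  have hm4 : (2:ℕ)^n = 4 * 2^(n-2) := by rw [show n = 2 + (n-2) by omega, pow_add]; norm_num
  have hm2 : (2:ℕ)^(n-2) = 2 * 2^(n-3) := by rw [show n-2 = 1 + (n-3) by omega, pow_add]; norm_num
  have hKpos : 1 ≤ (2:ℕ)^(n-3) := Nat.one_le_two_pow
  have hfM : (Finset.Icc 1 (2^n)).filter (fun j => 0 < Mp n i j)
      = (Finset.Icc 1 (2^n)).filter (fun j => 0 < Ment i j) := by
    apply Finset.filter_congr
    intro j hj
    rw [Finset.mem_Icc] at hj
    unfold Mp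
    rw [if_pos ⟨hi1, hi2, hj.1, hj.2⟩]
  have hfMs : (Finset.Icc 1 (2^n)).filter (fun j => 0 < Mps n i j)
      = (Finset.Icc 1 (2^n)).filter (fun j => 0 < Ments i j) := by
    apply Finset.filter_congr
    intro j hj
    rw [Finset.mem_Icc] at hj
    unfold Mps
    rw [if_pos ⟨hi1, hi2, hj.1, hj.2⟩]
  have hI : (i-1)/4 < 2^(n-2) := by omega
  have ht : 1 ≤ n - 2 := by omega
  have hval := Efun_val (t := n-2) ht hI
  rw [show n-2-1 = n-3 by omega] at hval
  have hneg := Efun_neg_count (m := 2^(n-2)) (I := (i-1)/4) hI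
  have e1 : ((Finset.Icc 1 (2^n)).filter (fun j => 0 < Mp n i j)).card
      = 3 * 2^(n-3) + Efun (2^(n-2)) ((i-1)/4) := by
    rw [hfM, count_Ment n i hn hi1 hi2]
  have e2 : ((Finset.Icc 1 (2^n)).filter (fun j => 0 < Mps n i j)).card
      = 3 * 2^(n-3) +
        ((Finset.Icc (-(((i-1)/4:ℕ):ℤ)) (((2^(n-2):ℕ):ℤ)-1-(((i-1)/4:ℕ):ℤ))).filter
          (fun d => (blockSC d).2 < 0)).card := by
    rw [hfMs, count_Ments n i hn hi1 hi2]
  have hsplit : (i ≤ 2^n / 2) ↔ (i-1)/4 < 2^(n-3) := by omega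
  constructor
  · intro hile
    have hIlt := hsplit.mp hile
    have hE := hval.1 hIlt
    constructor
    · rw [e1, hE]; omega
    · rw [e2]; omega
  · intro hgt
    have hIge : 2^(n-3) ≤ (i-1)/4 := by omega
    have hE := hval.2 hIge
    constructor
    · rw [e1]; omega
    · rw [e2]; omega
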